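/- arXiv:1308.3080 — 2 statements merged into one kernel-verified Lean document; each statement's English description precedes it below -/
import Mathlib

section
/- Average drift theorem (upper bound): if a nonnegative distance function d vanishes exactly on the absorbing optimal set, the chain is convergent, and for every t the average drift satisfies Δ̄_t ≥ c > 0, then the expected hitting time of the optimal set satisfies E[τ] ≤ E[d(Φ_0)]/c. -/
open MeasureTheory Filter

/-- First hitting time of the set `Sopt` by the process `Φ`. -/
noncomputable def hittingTime {Ω S : Type*} (Φ : ℕ → Ω → S) (Sopt : Finset S)
    (ω : Ω) : ℕ := sInf {t | Φ t ω ∈ Sopt}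

/-- Probability that the process is at state `x` at time `t`. -/
noncomputable def pstate {Ω S : Type*} [MeasurableSpace Ω] (μ : Measure Ω)
    (Φ : ℕ → Ω → S) (t : ℕ) (x : S) : ℝ := (μ {ω | Φ t ω = x}).toReal

/-- Point-wise drift at time `t` in state `x` with respect to the distance `d`:
`Δ(x) = ∑_y (d x - d y) P(Φ_{t+1} = y | Φ_t = x)`. -/
noncomputable def drift {Ω S : Type*} [Fintype S] [DecidableEq S] [MeasurableSpace Ω]
    (μ : Measure Ω) (Φ : ℕ → Ω → S) (d : S → ℝ) (t : ℕ) (x : S) : ℝ :=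
  ∑ y : S, (d x - d y) *
    ((μ {ω | Φ t ω = x ∧ Φ (t + 1) ω = y}).toReal / (μ {ω | Φ t ω = x}).toReal)

/-- Average drift at time `t`:
`Δ̄_t = ∑_{x ∉ Sopt} Δ(x) · P(Φ_t = x)/P(Φ_t ∉ Sopt)`, set to `0` when
`P(Φ_t ∉ Sopt) = 0`. -/
noncomputable def avgDrift {Ω S : Type*} [Fintype S] [DecidableEq S] [MeasurableSpace Ω]
    (μ : Measure Ω) (Φ : ℕ → Ω → S) (Sopt : Finset S) (d : S → ℝ) (t : ℕ) : ℝ :=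
  if (μ {ω | Φ t ω ∉ Sopt}).toReal = 0 then 0
  else ∑ x ∈ Soptᶜ, drift μ Φ d t x *
    (pstate μ Φ t x / (μ {ω | Φ t ω ∉ Sopt}).toReal)

/-- Average drift theorem (upper bound): if the nonnegative distance `d`
vanishes exactly on the absorbing optimal set, the chain is convergent, and
the average drift is at least `c > 0` at every time, then the expected hitting
time is at most `E[d(Φ_0)]/c`. -/
theorem average_drift_upper_bound
    {Ω S : Type*} [Fintype S] [DecidableEq S] [MeasurableSpace Ω]
    (μ : Measure Ω) [IsProbabilityMeasure μ]
    (Φ : ℕ → Ω → S) (Sopt : Finset S) (d : S → ℝ) (c : ℝ)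
    (hmeas : ∀ t x, MeasurableSet {ω | Φ t ω = x})
    (habs : ∀ ω t, Φ t ω ∈ Sopt → Φ (t + 1) ω ∈ Sopt)
    (hdnn : ∀ x, 0 ≤ d x)
    (hd0 : ∀ x, d x = 0 ↔ x ∈ Sopt)
    (hconv : Tendsto (fun t => μ {ω | Φ t ω ∉ Sopt}) atTop (nhds 0))
    (hc : 0 < c)
    (hdrift : ∀ t, c ≤ avgDrift μ Φ Sopt d t) :
    ∫⁻ ω, (hittingTime Φ Sopt ω : ENNReal) ∂μ
      ≤ ENNReal.ofReal ((∑ x : S, d x * pstate μ Φ 0 x) / c) := by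
  classical
  -- abbreviations
  set J : ℕ → S → S → ℝ := fun t x y => (μ {ω | Φ t ω = x ∧ Φ (t + 1) ω = y}).toReal with hJdef
  set E : ℕ → ℝ := fun t => ∑ x : S, d x * pstate μ Φ t x with hEdef
  set p : ℕ → ℝ := fun t => (μ {ω | Φ t ω ∉ Sopt}).toReal with hpdef
  -- measurability of the "not optimal" event
  have hmeasJ : ∀ t x y, MeasurableSet {ω | Φ t ω = x ∧ Φ (t + 1) ω = y} := by
    intro t x y
    exact (hmeas t x).inter (hmeas (t + 1) y)
  -- splitting a measurable set by the value of Φ t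
  have hsplit : ∀ (t : ℕ) (A : Set Ω), MeasurableSet A →
      (μ A).toReal = ∑ x : S, (μ (A ∩ {ω | Φ t ω = x})).toReal := by
    intro t A hA
    have h1 : A = ⋃ x ∈ (Finset.univ : Finset S), A ∩ {ω | Φ t ω = x} := by
      ext ω; simp
    have hd : Set.PairwiseDisjoint (↑(Finset.univ : Finset S))
        (fun x => A ∩ {ω | Φ t ω = x}) := by
      intro x _ y _ hxy
      apply Set.disjoint_left.2
      rintro ω ⟨-, ha⟩ ⟨-, hb⟩
      exact hxy (ha.symm.trans hb)
    have h2 : μ A = ∑ x : S, μ (A ∩ {ω | Φ t ω = x}) := by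
      conv_lhs => rw [h1]
      exact measure_biUnion_finset hd (fun x _ => hA.inter (hmeas t x))
    rw [h2, ENNReal.toReal_sum]
    intro x _
    exact measure_ne_top μ _
  -- marginals of J
  have hJrow : ∀ t x, ∑ y : S, J t x y = pstate μ Φ t x := by
    intro t x
    have := hsplit (t + 1) {ω | Φ t ω = x} (hmeas t x)
    rw [pstate, this]
    rfl
  have hJcol : ∀ t y, ∑ x : S, J t x y = pstate μ Φ (t + 1) y := by
    intro t y
    have := hsplit t {ω | Φ (t + 1) ω = y} (hmeas (t + 1) y)
    rw [pstate, this]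
    apply Finset.sum_congr rfl
    intro x _
    have hset : {ω | Φ t ω = x ∧ Φ (t + 1) ω = y}
        = {ω | Φ (t + 1) ω = y} ∩ {ω | Φ t ω = x} := by
      ext ω
      simp only [Set.mem_inter_iff, Set.mem_setOf_eq]
      tauto
    simp only [hJdef, hset]
  have hJnn : ∀ t x y, 0 ≤ J t x y := fun t x y => ENNReal.toReal_nonneg
  have hpsnn : ∀ t x, 0 ≤ pstate μ Φ t x := fun t x => ENNReal.toReal_nonneg
  have hpnn : ∀ t, 0 ≤ p t := fun t => ENNReal.toReal_nonneg
  have hEnn : ∀ t, 0 ≤ E t := by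
    intro t
    apply Finset.sum_nonneg
    intro x _
    exact mul_nonneg (hdnn x) (hpsnn t x)
  -- p t is positive (else avgDrift = 0 < c)
  have hppos : ∀ t, 0 < p t := by
    intro t
    rcases (hpnn t).lt_or_eq with h | h
    · exact h
    · exfalso
      have := hdrift t
      rw [avgDrift, if_pos h.symm] at this
      linarith
  -- drift x * pstate x = ∑_y (d x - d y) * J t x y
  have hdp : ∀ t x, drift μ Φ d t x * pstate μ Φ t x = ∑ y : S, (d x - d y) * J t x y := by
    intro t x
    by_cases hx : (μ {ω | Φ t ω = x}).toReal = 0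
    · have hJ0 : ∀ y, J t x y = 0 := by
        intro y
        have hle : μ {ω | Φ t ω = x ∧ Φ (t + 1) ω = y} ≤ μ {ω | Φ t ω = x} :=
          measure_mono (fun ω h => h.1)
        have : μ {ω | Φ t ω = x} = 0 := by
          have := measure_ne_top μ {ω | Φ t ω = x}
          exact (ENNReal.toReal_eq_zero_iff _).1 hx |>.resolve_right this
        simp only [hJdef]
        rw [ENNReal.toReal_eq_zero_iff]
        left
        exact le_antisymm (this ▸ hle) (zero_le)
      rw [show pstate μ Φ t x = 0 from hx]
      rw [mul_zero]
      symm
      apply Finset.sum_eq_zero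
      intro y _
      rw [hJ0 y, mul_zero]
    · rw [drift, Finset.sum_mul]
      apply Finset.sum_congr rfl
      intro y _
      have : pstate μ Φ t x = (μ {ω | Φ t ω = x}).toReal := rfl
      rw [this]
      field_simp
      rfl
  -- the key one-step inequality
  have hstep : ∀ t, c * p t ≤ E t - E (t + 1) := by
    intro t
    have hpt := hppos t
    have h1 : c * p t ≤ (∑ x ∈ Soptᶜ, drift μ Φ d t x * (pstate μ Φ t x / p t)) * p t := by
      have := hdrift t
      rw [avgDrift, if_neg (ne_of_gt hpt)] at this
      exact mul_le_mul_of_nonneg_right this (hpnn t)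
    have h2 : (∑ x ∈ Soptᶜ, drift μ Φ d t x * (pstate μ Φ t x / p t)) * p t
        = ∑ x ∈ Soptᶜ, drift μ Φ d t x * pstate μ Φ t x := by
      rw [Finset.sum_mul]
      apply Finset.sum_congr rfl
      intro x _
      field_simp
    have h3 : ∑ x ∈ Soptᶜ, drift μ Φ d t x * pstate μ Φ t x
        = ∑ x ∈ Soptᶜ, ∑ y : S, (d x - d y) * J t x y := by
      apply Finset.sum_congr rfl
      intro x _
      exact hdp t x
    -- expand
    have h4 : ∑ x ∈ Soptᶜ, ∑ y : S, (d x - d y) * J t x y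
        = (∑ x ∈ Soptᶜ, d x * pstate μ Φ t x) - ∑ x ∈ Soptᶜ, ∑ y : S, d y * J t x y := by
      rw [← Finset.sum_sub_distrib]
      apply Finset.sum_congr rfl
      intro x _
      have hxx : d x * pstate μ Φ t x = ∑ y : S, d x * J t x y := by
        rw [← Finset.mul_sum, hJrow]
      rw [hxx, ← Finset.sum_sub_distrib]
      apply Finset.sum_congr rfl
      intro y _
      ring
    have h5 : ∑ x ∈ Soptᶜ, d x * pstate μ Φ t x = E t := by
      show _ = ∑ x : S, d x * pstate μ Φ t x
      apply Finset.sum_subset (Finset.subset_univ _)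
      intro x _ hx
      have hxS : x ∈ Sopt := by
        by_contra h
        exact hx (Finset.mem_compl.2 h)
      rw [(hd0 x).2 hxS, zero_mul]
    have h6 : ∑ x ∈ Soptᶜ, ∑ y : S, d y * J t x y = E (t + 1) := by
      have hext : ∑ x ∈ Soptᶜ, ∑ y : S, d y * J t x y = ∑ x : S, ∑ y : S, d y * J t x y := by
        apply Finset.sum_subset (Finset.subset_univ _)
        intro x _ hx
        have hxS : x ∈ Sopt := by
          by_contra h
          exact hx (Finset.mem_compl.2 h)
        apply Finset.sum_eq_zero
        intro y _
        by_cases hy : y ∈ Sopt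
        · rw [(hd0 y).2 hy, zero_mul]
        · have : {ω | Φ t ω = x ∧ Φ (t + 1) ω = y} = ∅ := by
            ext ω
            simp only [Set.mem_setOf_eq, Set.mem_empty_iff_false, iff_false]
            rintro ⟨h1, h2⟩
            exact hy (h2 ▸ habs ω t (h1 ▸ hxS))
          have : J t x y = 0 := by
            simp only [hJdef, this, measure_empty, ENNReal.toReal_zero]
          rw [this, mul_zero]
      rw [hext, Finset.sum_comm]
      show _ = ∑ y : S, d y * pstate μ Φ (t + 1) y
      apply Finset.sum_congr rfl
      intro y _
      rw [← hJcol t y, Finset.mul_sum]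
    calc c * p t ≤ _ := h1
    _ = _ := h2
    _ = _ := h3
    _ = E t - E (t + 1) := by rw [h4, h5, h6]
  -- summing: partial sums bounded
  have hsum : ∀ T : ℕ, ∑ t ∈ Finset.range T, p t ≤ E 0 / c := by
    intro T
    have h1 : c * ∑ t ∈ Finset.range T, p t ≤ E 0 - E T := by
      rw [Finset.mul_sum]
      calc ∑ t ∈ Finset.range T, c * p t ≤ ∑ t ∈ Finset.range T, (E t - E (t + 1)) :=
            Finset.sum_le_sum fun t _ => hstep t
      _ = E 0 - E T := by rw [Finset.sum_range_sub' E T]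
    have h2 : c * ∑ t ∈ Finset.range T, p t ≤ E 0 := le_trans h1 (by linarith [hEnn T])
    rw [le_div_iff₀ hc]
    nlinarith
  -- bound the hitting time pointwise by the sum of indicators
  have hpt : ∀ ω, (hittingTime Φ Sopt ω : ENNReal)
      ≤ ∑' t : ℕ, Set.indicator {ω' | Φ t ω' ∉ Sopt} (fun _ => (1 : ENNReal)) ω := by
    intro ω
    set m := hittingTime Φ Sopt ω with hm
    have key : ∀ t < m, Φ t ω ∉ Sopt := by
      intro t ht hmem
      have : m ≤ t := Nat.sInf_le hmem
      omega
    have hone : ∀ t ∈ Finset.range m,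
        Set.indicator {ω' | Φ t ω' ∉ Sopt} (fun _ => (1 : ENNReal)) ω = 1 := by
      intro t ht
      exact Set.indicator_of_mem (show ω ∈ {ω' | Φ t ω' ∉ Sopt} from key t (Finset.mem_range.1 ht)) _
    calc (m : ENNReal) = ∑ t ∈ Finset.range m,
          Set.indicator {ω' | Φ t ω' ∉ Sopt} (fun _ => (1 : ENNReal)) ω := by
          rw [Finset.sum_congr rfl hone]
          simp
    _ ≤ _ := ENNReal.sum_le_tsum _
  -- measurability of the "not optimal" sets
  have hmeasN : ∀ t, MeasurableSet {ω | Φ t ω ∉ Sopt} := by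
    intro t
    have : {ω | Φ t ω ∉ Sopt} = ⋃ x ∈ (Soptᶜ : Finset S), {ω | Φ t ω = x} := by
      ext ω
      simp [Finset.mem_compl]
    rw [this]
    exact (Soptᶜ : Finset S).measurableSet_biUnion (fun x _ => hmeas t x)
  -- put everything together
  calc ∫⁻ ω, (hittingTime Φ Sopt ω : ENNReal) ∂μ
      ≤ ∫⁻ ω, ∑' t : ℕ, Set.indicator {ω' | Φ t ω' ∉ Sopt} (fun _ => (1 : ENNReal)) ω ∂μ :=
        lintegral_mono hpt
    _ = ∑' t : ℕ, ∫⁻ ω, Set.indicator {ω' | Φ t ω' ∉ Sopt} (fun _ => (1 : ENNReal)) ω ∂μ := by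
        apply lintegral_tsum
        intro t
        exact (measurable_const.indicator (hmeasN t)).aemeasurable
    _ = ∑' t : ℕ, μ {ω | Φ t ω ∉ Sopt} := by
        apply tsum_congr
        intro t
        rw [lintegral_indicator (hmeasN t)]
        simp
    _ ≤ ENNReal.ofReal (E 0 / c) := by
        rw [ENNReal.tsum_eq_iSup_sum]
        apply iSup_le
        intro s
        have hsub : s ⊆ Finset.range (s.sup id + 1) := by
          intro t ht
          simp only [Finset.mem_range]
          exact Nat.lt_succ_of_le (Finset.le_sup (f := id) ht)
        calc ∑ t ∈ s, μ {ω | Φ t ω ∉ Sopt}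
            ≤ ∑ t ∈ Finset.range (s.sup id + 1), μ {ω | Φ t ω ∉ Sopt} :=
              Finset.sum_le_sum_of_subset hsub
          _ = ENNReal.ofReal (∑ t ∈ Finset.range (s.sup id + 1), p t) := by
              rw [ENNReal.ofReal_sum_of_nonneg (fun t _ => hpnn t)]
              apply Finset.sum_congr rfl
              intro t _
              rw [hpdef]
              exact (ENNReal.ofReal_toReal (measure_ne_top μ _)).symm
          _ ≤ ENNReal.ofReal (E 0 / c) :=
              ENNReal.ofReal_le_ofReal (hsum _)
    _ = ENNReal.ofReal ((∑ x : S, d x * pstate μ Φ 0 x) / c) := rfl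
end

section
/- Average drift theorem (lower bound): if a nonnegative distance function d vanishes exactly on the absorbing optimal set and for every t the average drift satisfies Δ̄_t ≤ c with c > 0, then the expected hitting time satisfies E[τ] ≥ E[d(Φ_0)]/c. -/
open MeasureTheory Filter

section Aux

variable {Ω S : Type*} [Fintype S] [DecidableEq S] [MeasurableSpace Ω]

/-- probability of joint event `Φ t = x ∧ Φ (t+1) = y`. -/
noncomputable def jointP (μ : Measure Ω) (Φ : ℕ → Ω → S) (t : ℕ) (x y : S) : ℝ :=
  (μ {ω | Φ t ω = x ∧ Φ (t + 1) ω = y}).toReal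

variable (μ : Measure Ω) [IsProbabilityMeasure μ] (Φ : ℕ → Ω → S)
  (hmeas : ∀ t x, MeasurableSet {ω | Φ t ω = x})

include hmeas in
lemma joint_measurable (t : ℕ) (x y : S) :
    MeasurableSet {ω | Φ t ω = x ∧ Φ (t + 1) ω = y} := by
  have : {ω | Φ t ω = x ∧ Φ (t + 1) ω = y}
      = {ω | Φ t ω = x} ∩ {ω | Φ (t + 1) ω = y} := rfl
  rw [this]; exact (hmeas t x).inter (hmeas (t + 1) y)

include hmeas in
lemma notopt_measurable (Sopt : Finset S) (t : ℕ) :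
    MeasurableSet {ω | Φ t ω ∉ Sopt} := by
  have : {ω | Φ t ω ∉ Sopt} = ⋃ x ∈ {x : S | x ∉ Sopt}, {ω | Φ t ω = x} := by
    ext ω; simp [eq_comm]
  rw [this]
  exact MeasurableSet.biUnion (Set.to_countable _) fun x _ => hmeas t x

include hmeas in
lemma pstate_eq_sum (t : ℕ) (x : S) :
    pstate μ Φ t x = ∑ y : S, jointP μ Φ t x y := by
  have h : {ω | Φ t ω = x} = ⋃ y ∈ (Finset.univ : Finset S),
      {ω | Φ t ω = x ∧ Φ (t + 1) ω = y} := by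
    ext ω; simp
  have hdisj : Set.PairwiseDisjoint (↑(Finset.univ : Finset S))
      (fun y => {ω | Φ t ω = x ∧ Φ (t + 1) ω = y}) := by
    intro a _ b _ hab
    refine Set.disjoint_left.2 fun ω h1 h2 => hab ?_
    rw [← h1.2, h2.2]
  have := measure_biUnion_finset (μ := μ) hdisj (fun y _ => joint_measurable Φ hmeas t x y)
  rw [pstate, h, this, ENNReal.toReal_sum (fun y _ => measure_ne_top μ _)]
  rfl

include hmeas in
lemma pstate_succ_eq_sum (t : ℕ) (y : S) :
    pstate μ Φ (t + 1) y = ∑ x : S, jointP μ Φ t x y := by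
  have h : {ω | Φ (t + 1) ω = y} = ⋃ x ∈ (Finset.univ : Finset S),
      {ω | Φ t ω = x ∧ Φ (t + 1) ω = y} := by
    ext ω; simp
  have hdisj : Set.PairwiseDisjoint (↑(Finset.univ : Finset S))
      (fun x => {ω | Φ t ω = x ∧ Φ (t + 1) ω = y}) := by
    intro a _ b _ hab
    refine Set.disjoint_left.2 fun ω h1 h2 => hab ?_
    rw [← h1.1, h2.1]
  have := measure_biUnion_finset (μ := μ) hdisj (fun x _ => joint_measurable Φ hmeas t x y)
  rw [pstate, h, this, ENNReal.toReal_sum (fun x _ => measure_ne_top μ _)]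
  rfl

lemma jointP_le_pstate (t : ℕ) (x y : S) : jointP μ Φ t x y ≤ pstate μ Φ t x := by
  refine ENNReal.toReal_mono (measure_ne_top μ _) (measure_mono ?_)
  exact fun ω h => h.1

lemma jointP_nonneg (t : ℕ) (x y : S) : 0 ≤ jointP μ Φ t x y := ENNReal.toReal_nonneg

lemma pstate_nonneg (t : ℕ) (x : S) : 0 ≤ pstate μ Φ t x := ENNReal.toReal_nonneg

/-- drift times probability equals sum of joint terms. -/
lemma drift_mul_pstate (d : S → ℝ) (t : ℕ) (x : S) :
    drift μ Φ d t x * pstate μ Φ t x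
      = ∑ y : S, (d x - d y) * jointP μ Φ t x y := by
  rw [drift, Finset.sum_mul]
  refine Finset.sum_congr rfl fun y _ => ?_
  by_cases hp : pstate μ Φ t x = 0
  · have hq : jointP μ Φ t x y = 0 :=
      le_antisymm (hp ▸ jointP_le_pstate μ Φ t x y) (jointP_nonneg μ Φ t x y)
    rw [hp, hq]; ring
  · rw [show (μ {ω | Φ t ω = x}).toReal = pstate μ Φ t x from rfl]
    rw [show (μ {ω | Φ t ω = x ∧ Φ (t + 1) ω = y}).toReal = jointP μ Φ t x y from rfl]
    field_simp

end Aux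
section Aux2

variable {Ω S : Type*} [Fintype S] [DecidableEq S] [MeasurableSpace Ω]
variable (μ : Measure Ω) [IsProbabilityMeasure μ] (Φ : ℕ → Ω → S)

lemma jointP_absorb (Sopt : Finset S)
    (habs : ∀ ω t, Φ t ω ∈ Sopt → Φ (t + 1) ω ∈ Sopt)
    {t : ℕ} {x y : S} (hx : x ∈ Sopt) (hy : y ∉ Sopt) :
    jointP μ Φ t x y = 0 := by
  have : {ω | Φ t ω = x ∧ Φ (t + 1) ω = y} = ∅ := by
    ext ω; simp only [Set.mem_setOf_eq, Set.mem_empty_iff_false, iff_false]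
    rintro ⟨h1, h2⟩
    exact hy (h2 ▸ habs ω t (h1 ▸ hx))
  rw [jointP, this]; simp

lemma step_eq (Sopt : Finset S) (d : S → ℝ)
    (hmeas : ∀ t x, MeasurableSet {ω | Φ t ω = x})
    (habs : ∀ ω t, Φ t ω ∈ Sopt → Φ (t + 1) ω ∈ Sopt)
    (hd0 : ∀ x, x ∈ Sopt → d x = 0) (t : ℕ) :
    (∑ x : S, d x * pstate μ Φ t x) - (∑ x : S, d x * pstate μ Φ (t + 1) x)
      = ∑ x ∈ Soptᶜ, drift μ Φ d t x * pstate μ Φ t x := by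
  have h1 : ∑ x : S, d x * pstate μ Φ t x
      = ∑ x : S, ∑ y : S, d x * jointP μ Φ t x y := by
    refine Finset.sum_congr rfl fun x _ => ?_
    rw [pstate_eq_sum μ Φ hmeas, Finset.mul_sum]
  have h2 : ∑ y : S, d y * pstate μ Φ (t + 1) y
      = ∑ x : S, ∑ y : S, d y * jointP μ Φ t x y := by
    rw [Finset.sum_comm]
    refine Finset.sum_congr rfl fun y _ => ?_
    rw [pstate_succ_eq_sum μ Φ hmeas, Finset.mul_sum]
  rw [h1, h2, ← Finset.sum_sub_distrib]
  simp_rw [← Finset.sum_sub_distrib, ← sub_mul]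
  rw [← Finset.sum_add_sum_compl Sopt
    (fun x => ∑ y : S, (d x - d y) * jointP μ Φ t x y)]
  have hzero : ∑ x ∈ Sopt, ∑ y : S, (d x - d y) * jointP μ Φ t x y = 0 := by
    refine Finset.sum_eq_zero fun x hx => Finset.sum_eq_zero fun y _ => ?_
    by_cases hy : y ∈ Sopt
    · rw [hd0 x hx, hd0 y hy]; ring
    · rw [jointP_absorb μ Φ Sopt habs hx hy, mul_zero]
  rw [hzero, zero_add]
  exact Finset.sum_congr rfl fun x _ => (drift_mul_pstate μ Φ d t x).symm

lemma pstate_le_notopt (Sopt : Finset S) {t : ℕ} {x : S} (hx : x ∉ Sopt) :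
    pstate μ Φ t x ≤ (μ {ω | Φ t ω ∉ Sopt}).toReal := by
  refine ENNReal.toReal_mono (measure_ne_top μ _) (measure_mono fun ω h => ?_)
  simp only [Set.mem_setOf_eq] at h ⊢
  exact h ▸ hx

lemma step_le (Sopt : Finset S) (d : S → ℝ) (c : ℝ)
    (hmeas : ∀ t x, MeasurableSet {ω | Φ t ω = x})
    (habs : ∀ ω t, Φ t ω ∈ Sopt → Φ (t + 1) ω ∈ Sopt)
    (hd0 : ∀ x, x ∈ Sopt → d x = 0)
    (hdrift : ∀ t, avgDrift μ Φ Sopt d t ≤ c) (t : ℕ) :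
    (∑ x : S, d x * pstate μ Φ t x) - (∑ x : S, d x * pstate μ Φ (t + 1) x)
      ≤ c * (μ {ω | Φ t ω ∉ Sopt}).toReal := by
  rw [step_eq μ Φ Sopt d hmeas habs hd0 t]
  set Pr := (μ {ω | Φ t ω ∉ Sopt}).toReal with hPr
  by_cases h0 : Pr = 0
  · have : ∀ x ∈ Soptᶜ, drift μ Φ d t x * pstate μ Φ t x = 0 := by
      intro x hx
      have hx' : x ∉ Sopt := Finset.mem_compl.1 hx
      have hp : pstate μ Φ t x = 0 :=
        le_antisymm (h0 ▸ pstate_le_notopt μ Φ Sopt hx') (pstate_nonneg μ Φ t x)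
      rw [hp, mul_zero]
    rw [Finset.sum_eq_zero this, h0, mul_zero]
  · have hPpos : 0 < Pr := lt_of_le_of_ne ENNReal.toReal_nonneg (Ne.symm h0)
    have havg : avgDrift μ Φ Sopt d t
        = (∑ x ∈ Soptᶜ, drift μ Φ d t x * pstate μ Φ t x) / Pr := by
      rw [avgDrift, if_neg h0, Finset.sum_div]
      exact Finset.sum_congr rfl fun x _ => by rw [mul_div_assoc]
    have := hdrift t
    rw [havg, div_le_iff₀ hPpos] at this
    linarith
end Aux2
section Aux3

variable {Ω S : Type*} [Fintype S] [DecidableEq S] [MeasurableSpace Ω]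
variable (μ : Measure Ω) [IsProbabilityMeasure μ] (Φ : ℕ → Ω → S)

lemma absorb_mono (Sopt : Finset S)
    (habs : ∀ ω t, Φ t ω ∈ Sopt → Φ (t + 1) ω ∈ Sopt)
    (ω : Ω) {j k : ℕ} (hjk : j ≤ k) (hj : Φ j ω ∈ Sopt) : Φ k ω ∈ Sopt := by
  induction k, hjk using Nat.le_induction with
  | base => exact hj
  | succ n hn ih => exact habs ω n ih

/-- The set where the hitting time exceeds `k`. -/
lemma hitting_gt_eq (Sopt : Finset S)
    (habs : ∀ ω t, Φ t ω ∈ Sopt → Φ (t + 1) ω ∈ Sopt) (k : ℕ) :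
    {ω | k < hittingTime Φ Sopt ω}
      = {ω | Φ k ω ∉ Sopt} ∩ {ω | ∃ t, Φ t ω ∈ Sopt} := by
  ext ω
  simp only [Set.mem_setOf_eq, Set.mem_inter_iff]
  constructor
  · intro hk
    have hne : {t | Φ t ω ∈ Sopt}.Nonempty := by
      by_contra h
      rw [Set.not_nonempty_iff_eq_empty] at h
      simp [hittingTime, h] at hk
    refine ⟨fun hmem => ?_, hne⟩
    have := Nat.sInf_le (show k ∈ {t | Φ t ω ∈ Sopt} from hmem)
    rw [hittingTime] at hk; omega
  · rintro ⟨hk, t, ht⟩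
    have hne : {t | Φ t ω ∈ Sopt}.Nonempty := ⟨t, ht⟩
    have hmem := Nat.sInf_mem hne
    rw [hittingTime]
    by_contra h
    push_neg at h
    exact hk (absorb_mono Φ Sopt habs ω h hmem)

lemma hitting_gt_measure (Sopt : Finset S)
    (hmeas : ∀ t x, MeasurableSet {ω | Φ t ω = x})
    (habs : ∀ ω t, Φ t ω ∈ Sopt → Φ (t + 1) ω ∈ Sopt)
    (hconv : Tendsto (fun t => μ {ω | Φ t ω ∉ Sopt}) atTop (nhds 0)) (k : ℕ) :
    μ {ω | k < hittingTime Φ Sopt ω} = μ {ω | Φ k ω ∉ Sopt} := by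
  rw [hitting_gt_eq Φ Sopt habs k]
  refine measure_inter_conull ?_
  have hsub : ∀ t, {ω | ∃ t, Φ t ω ∈ Sopt}ᶜ ⊆ {ω | Φ t ω ∉ Sopt} := by
    intro t ω hω
    simp only [Set.mem_compl_iff, Set.mem_setOf_eq, not_exists] at hω ⊢
    exact hω t
  have hle : ∀ t, μ {ω | ∃ t, Φ t ω ∈ Sopt}ᶜ ≤ μ {ω | Φ t ω ∉ Sopt} :=
    fun t => measure_mono (hsub t)
  exact le_antisymm (ge_of_tendsto' hconv hle) zero_le

lemma hitting_gt_measurable (Sopt : Finset S)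
    (hmeas : ∀ t x, MeasurableSet {ω | Φ t ω = x})
    (habs : ∀ ω t, Φ t ω ∈ Sopt → Φ (t + 1) ω ∈ Sopt) (k : ℕ) :
    MeasurableSet {ω | k < hittingTime Φ Sopt ω} := by
  rw [hitting_gt_eq Φ Sopt habs k]
  refine (notopt_measurable Φ hmeas Sopt k).inter ?_
  have : {ω | ∃ t, Φ t ω ∈ Sopt} = ⋃ t : ℕ, {ω | Φ t ω ∉ Sopt}ᶜ := by
    ext ω; simp
  rw [this]
  exact MeasurableSet.iUnion fun t => (notopt_measurable Φ hmeas Sopt t).compl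

lemma nat_cast_eq_tsum (n : ℕ) :
    (n : ENNReal) = ∑' k : ℕ, if k < n then (1 : ENNReal) else 0 := by
  rw [tsum_eq_sum (s := Finset.range n) (fun k hk => by
    simp only [Finset.mem_range] at hk; simp [hk])]
  have h1 : ∀ k ∈ Finset.range n, (if k < n then (1 : ENNReal) else 0) = 1 :=
    fun k hk => by simp [Finset.mem_range.1 hk]
  rw [Finset.sum_congr rfl h1]
  simp

lemma lintegral_hitting (Sopt : Finset S)
    (hmeas : ∀ t x, MeasurableSet {ω | Φ t ω = x})
    (habs : ∀ ω t, Φ t ω ∈ Sopt → Φ (t + 1) ω ∈ Sopt) :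
    ∫⁻ ω, (hittingTime Φ Sopt ω : ENNReal) ∂μ
      = ∑' k : ℕ, μ {ω | k < hittingTime Φ Sopt ω} := by
  have heq : ∀ ω, (hittingTime Φ Sopt ω : ENNReal)
      = ∑' k : ℕ, Set.indicator {ω | k < hittingTime Φ Sopt ω} (fun _ => 1) ω := by
    intro ω
    rw [nat_cast_eq_tsum]
    congr 1; ext k
    by_cases h : k < hittingTime Φ Sopt ω
    · simp [h, Set.indicator_of_mem (show ω ∈ {ω | k < hittingTime Φ Sopt ω} from h)]
    · simp [h, Set.indicator_of_notMem (show ω ∉ {ω | k < hittingTime Φ Sopt ω} from h)]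
  simp_rw [heq]
  rw [lintegral_tsum (fun k => ((measurable_const (a := (1:ENNReal))).indicator
    (hitting_gt_measurable Φ Sopt hmeas habs k)).aemeasurable)]
  refine tsum_congr fun k => ?_
  rw [lintegral_indicator (hitting_gt_measurable Φ Sopt hmeas habs k) (fun _ => 1)]
  simp

end Aux3
/-- Average drift theorem (lower bound): if the nonnegative distance `d`
vanishes exactly on the absorbing optimal set, the chain is convergent, and
the average drift is at most `c` (with `c > 0`) at every time, then the
expected hitting time is at least `E[d(Φ_0)]/c`. -/
theorem average_drift_lower_bound
    {Ω S : Type*} [Fintype S] [DecidableEq S] [MeasurableSpace Ω]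
    (μ : Measure Ω) [IsProbabilityMeasure μ]
    (Φ : ℕ → Ω → S) (Sopt : Finset S) (d : S → ℝ) (c : ℝ)
    (hmeas : ∀ t x, MeasurableSet {ω | Φ t ω = x})
    (habs : ∀ ω t, Φ t ω ∈ Sopt → Φ (t + 1) ω ∈ Sopt)
    (hdnn : ∀ x, 0 ≤ d x)
    (hd0 : ∀ x, d x = 0 ↔ x ∈ Sopt)
    (hconv : Tendsto (fun t => μ {ω | Φ t ω ∉ Sopt}) atTop (nhds 0))
    (hc : 0 < c)
    (hdrift : ∀ t, avgDrift μ Φ Sopt d t ≤ c) :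
    ∫⁻ ω, (hittingTime Φ Sopt ω : ENNReal) ∂μ
      ≥ ENNReal.ofReal ((∑ x : S, d x * pstate μ Φ 0 x) / c) := by
  classical
  set D : ℕ → ℝ := fun t => ∑ x : S, d x * pstate μ Φ t x with hDdef
  set Pr : ℕ → ℝ := fun t => (μ {ω | Φ t ω ∉ Sopt}).toReal with hPrdef
  have hd0' : ∀ x, x ∈ Sopt → d x = 0 := fun x hx => (hd0 x).2 hx
  have hPr0 : Tendsto Pr atTop (nhds 0) := by
    have h := (ENNReal.tendsto_toReal (a := 0) (by simp)).comp hconv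
    rw [ENNReal.toReal_zero] at h
    exact h
  have hDle : ∀ t, D t ≤ (∑ x : S, d x) * Pr t := by
    intro t
    rw [Finset.sum_mul]
    refine Finset.sum_le_sum fun x _ => ?_
    by_cases hx : x ∈ Sopt
    · rw [hd0' x hx]; simp
    · exact mul_le_mul_of_nonneg_left (pstate_le_notopt μ Φ Sopt hx) (hdnn x)
  have hDnn : ∀ t, 0 ≤ D t := fun t =>
    Finset.sum_nonneg fun x _ => mul_nonneg (hdnn x) (pstate_nonneg μ Φ t x)
  have hDto : Tendsto D atTop (nhds 0) := by
    refine squeeze_zero hDnn hDle ?_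
    have := hPr0.const_mul (∑ x : S, d x)
    simpa using this
  have htel : ∀ T, D 0 - D T ≤ c * ∑ t ∈ Finset.range T, Pr t := by
    intro T
    calc D 0 - D T = ∑ t ∈ Finset.range T, (D t - D (t + 1)) :=
          (Finset.sum_range_sub' D T).symm
      _ ≤ ∑ t ∈ Finset.range T, c * Pr t :=
          Finset.sum_le_sum fun t _ => step_le μ Φ Sopt d c hmeas habs hd0' hdrift t
      _ = c * ∑ t ∈ Finset.range T, Pr t := (Finset.mul_sum _ _ _).symm
  rw [ge_iff_le, lintegral_hitting μ Φ Sopt hmeas habs,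
    tsum_congr (hitting_gt_measure μ Φ Sopt hmeas habs hconv)]
  by_cases hfin : (∑' k : ℕ, μ {ω | Φ k ω ∉ Sopt}) = ⊤
  · rw [hfin]; exact le_top
  · set M := (∑' k : ℕ, μ {ω | Φ k ω ∉ Sopt}).toReal with hM
    have hsum_le : ∀ T, ∑ t ∈ Finset.range T, Pr t ≤ M := by
      intro T
      have h1 : ∑ t ∈ Finset.range T, Pr t
          = (∑ t ∈ Finset.range T, μ {ω | Φ t ω ∉ Sopt}).toReal :=
        (ENNReal.toReal_sum fun t _ => measure_ne_top μ _).symm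
      rw [h1]
      exact ENNReal.toReal_mono hfin (ENNReal.sum_le_tsum _)
    have hD0 : D 0 ≤ c * M := by
      have h1 : ∀ T, D 0 - D T ≤ c * M := fun T =>
        (htel T).trans (mul_le_mul_of_nonneg_left (hsum_le T) hc.le)
      have h2 : Tendsto (fun T => D 0 - D T) atTop (nhds (D 0 - 0)) :=
        tendsto_const_nhds.sub hDto
      have h3 := le_of_tendsto h2 (Filter.Eventually.of_forall h1)
      linarith
    calc ENNReal.ofReal (D 0 / c) ≤ ENNReal.ofReal M :=
          ENNReal.ofReal_le_ofReal ((div_le_iff₀ hc).2 (by linarith))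
      _ = _ := ENNReal.ofReal_toReal hfin
end
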